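/- Let A ⊆ 𝔸ⁿ be a variety whose m irreducible components are linear d-dimensional subspaces of kⁿ, all having the same set of minimal free variables {X_j : j ∈ J}. Then for every J′ ⊆ {1,…,n} with #J′ = d and J′ ≠ J, the set ⊕_{j∈J′} ℕe_j is not contained in D(A); concretely, choosing ℓ ∈ J′ \ J, the product f = ∏_{i=1}^m (X_ℓ + Σ_{j∈J, j<ℓ} b^{(i)}_{ℓ,j} X_j) lies in I(A) and has leading exponent m·e_ℓ ∈ ⊕_{j∈J′} ℕe_j. -/

import Mathlib

open MvPolynomial

/-- `β` is the leading exponent of `f` with respect to the monomial order `m`. -/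
def IsLeadExp {σ : Type*} {k : Type*} [CommSemiring k] (m : MonomialOrder σ)
    (f : MvPolynomial σ k) (β : σ →₀ ℕ) : Prop :=
  β ∈ f.support ∧ ∀ α ∈ f.support, α ≠ β → m.toSyn α < m.toSyn β

/-- `C(I)`: the set of leading exponents of nonzero elements of the ideal `I`. -/
def expC {σ : Type*} {k : Type*} [CommSemiring k] (m : MonomialOrder σ)
    (I : Ideal (MvPolynomial σ k)) : Set (σ →₀ ℕ) :=
  {β | ∃ f ∈ I, IsLeadExp m f β}

/-- `D(I)`: the standard set (set of exponents of standard monomials) of the ideal `I`. -/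
def expD {σ : Type*} {k : Type*} [CommSemiring k] (m : MonomialOrder σ)
    (I : Ideal (MvPolynomial σ k)) : Set (σ →₀ ℕ) :=
  (expC m I)ᶜ

/-- `{X_j : j ∈ J}` is a set of free variables of `A′ ⊆ kⁿ`: for every choice of values of
the coordinates in `J` there is a unique point of `A′` with these coordinates. -/
def IsFreeVars {k : Type*} [Field k] {n : ℕ} (A' : Set (Fin n → k)) (J : Finset (Fin n)) :
    Prop :=
  ∀ v : Fin n → k, ∃! x, x ∈ A' ∧ ∀ j ∈ J, x j = v j

/-- `{X_j : j ∈ J}` is the set of *minimal* free variables of `A′`: it is a set of free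
variables, and no `j ∈ J` can be replaced by a smaller index `i ∉ J` so that the result is
still a set of free variables. -/
def IsMinFreeVars {k : Type*} [Field k] {n : ℕ} (A' : Set (Fin n → k)) (J : Finset (Fin n)) :
    Prop :=
  IsFreeVars A' J ∧
    ∀ j ∈ J, ∀ i ∉ J, i < j → ¬ IsFreeVars A' (insert i (J.erase j))

/-- `A′` is a `d`-dimensional affine subspace of `kⁿ`. -/
def IsAffineDPlane {k : Type*} [Field k] {n : ℕ} (d : ℕ) (A' : Set (Fin n → k)) : Prop :=
  ∃ S : AffineSubspace k (Fin n → k),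
    A' = (S : Set (Fin n → k)) ∧ A'.Nonempty ∧ Module.finrank k S.direction = d

/-- The `d`-plane `γ + ⊕_{j∈J} ℕe_j` in `ℕⁿ` (for `γ` vanishing on `J`): the set of
exponents agreeing with `γ` outside `J`. -/
def dPlane {n : ℕ} (γ : Fin n →₀ ℕ) (J : Finset (Fin n)) : Set (Fin n →₀ ℕ) :=
  {β | ∀ i ∉ J, β i = γ i}

/-- The parameters `(J, γ)` of the `d`-planes contained in `δ`. -/
def planesIn {n : ℕ} (d : ℕ) (δ : Set (Fin n →₀ ℕ)) :
    Set (Finset (Fin n) × (Fin n →₀ ℕ)) :=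
  {Jγ | Jγ.1.card = d ∧ (∀ j ∈ Jγ.1, Jγ.2 j = 0) ∧ dPlane Jγ.2 Jγ.1 ⊆ δ}

/-- `E(δ)`: the union of all `d`-planes contained in `δ`. -/
def Eset {n : ℕ} (d : ℕ) (δ : Set (Fin n →₀ ℕ)) : Set (Fin n →₀ ℕ) :=
  ⋃ Jγ ∈ planesIn d δ, dPlane Jγ.2 Jγ.1


section Aux

open MvPolynomial

variable {σ : Type*} {k : Type*} [CommRing k] [IsDomain k] {m : MonomialOrder σ}

lemma isLeadExp_one : IsLeadExp m (1 : MvPolynomial σ k) 0 := by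
  classical
  constructor
  · rw [MvPolynomial.mem_support_iff, MvPolynomial.coeff_one, if_pos rfl]
    exact one_ne_zero
  · intro a ha hne
    rw [MvPolynomial.mem_support_iff, MvPolynomial.coeff_one,
      if_neg (fun h => hne h.symm)] at ha
    exact absurd rfl ha

lemma IsLeadExp.le_of_mem {f : MvPolynomial σ k} {β : σ →₀ ℕ} (hf : IsLeadExp m f β)
    {a : σ →₀ ℕ} (ha : a ∈ f.support) : m.toSyn a ≤ m.toSyn β := by
  rcases eq_or_ne a β with rfl | h
  · exact le_rfl
  · exact (hf.2 a ha h).le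

set_option maxHeartbeats 1000000 in
lemma IsLeadExp.mul {f g : MvPolynomial σ k} {β γ : σ →₀ ℕ}
    (hf : IsLeadExp m f β) (hg : IsLeadExp m g γ) :
    IsLeadExp m (f * g) (β + γ) := by
  classical
  have key : MvPolynomial.coeff (β + γ) (f * g) =
      MvPolynomial.coeff β f * MvPolynomial.coeff γ g := by
    rw [MvPolynomial.coeff_mul]
    refine Finset.sum_eq_single_of_mem (β, γ) (Finset.HasAntidiagonal.mem_antidiagonal.mpr rfl) ?_
    rintro ⟨a, c⟩ hmem hne
    rw [Finset.HasAntidiagonal.mem_antidiagonal] at hmem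
    by_contra hcoef
    have ha : a ∈ f.support := by
      rw [MvPolynomial.mem_support_iff]; intro h0; apply hcoef; rw [h0, zero_mul]
    have hc : c ∈ g.support := by
      rw [MvPolynomial.mem_support_iff]; intro h0; apply hcoef; rw [h0, mul_zero]
    have hab : a = β ∧ c = γ := by
      by_contra hor
      have hsum : m.toSyn a + m.toSyn c = m.toSyn β + m.toSyn γ := by
        rw [← map_add, ← map_add, hmem]
      rcases not_and_or.mp hor with h | h
      · have h1 : m.toSyn a < m.toSyn β := hf.2 a ha h
        have h2 : m.toSyn c ≤ m.toSyn γ := hg.le_of_mem hc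
        exact absurd hsum (ne_of_lt (add_lt_add_of_lt_of_le h1 h2))
      · have h1 : m.toSyn a ≤ m.toSyn β := hf.le_of_mem ha
        have h2 : m.toSyn c < m.toSyn γ := hg.2 c hc h
        exact absurd hsum (ne_of_lt (add_lt_add_of_le_of_lt h1 h2))
    exact hne (by rw [hab.1, hab.2])
  constructor
  · rw [MvPolynomial.mem_support_iff, key]
    exact mul_ne_zero (MvPolynomial.mem_support_iff.mp hf.1)
      (MvPolynomial.mem_support_iff.mp hg.1)
  · intro α hα hne
    obtain ⟨a, ha, c, hc, rfl⟩ := Finset.mem_add.mp (MvPolynomial.support_mul f g hα)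
    rcases eq_or_ne a β with rfl | h
    · have h2 : m.toSyn c < m.toSyn γ := hg.2 c hc (fun hcg => hne (by rw [hcg]))
      calc m.toSyn (a + c) = m.toSyn a + m.toSyn c := map_add _ _ _
        _ < m.toSyn a + m.toSyn γ := add_lt_add_of_le_of_lt le_rfl h2
        _ = m.toSyn (a + γ) := (map_add _ _ _).symm
    · have h1 : m.toSyn a < m.toSyn β := hf.2 a ha h
      have h2 : m.toSyn c ≤ m.toSyn γ := hg.le_of_mem hc
      calc m.toSyn (a + c) = m.toSyn a + m.toSyn c := map_add _ _ _
        _ < m.toSyn β + m.toSyn γ := add_lt_add_of_lt_of_le h1 h2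
        _ = m.toSyn (β + γ) := (map_add _ _ _).symm

lemma isLeadExp_prod {ι : Type*} (s : Finset ι) (f : ι → MvPolynomial σ k)
    (β : ι → (σ →₀ ℕ)) (h : ∀ i ∈ s, IsLeadExp m (f i) (β i)) :
    IsLeadExp m (∏ i ∈ s, f i) (∑ i ∈ s, β i) := by
  classical
  induction s using Finset.cons_induction with
  | empty => simpa using isLeadExp_one
  | cons a s ha ih =>
    rw [Finset.prod_cons, Finset.sum_cons]
    exact (h a (Finset.mem_cons_self a s)).mul
      (ih (fun i hi => h i (Finset.mem_cons_of_mem hi)))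

lemma isLeadExp_factor {n : ℕ} {m : MonomialOrder (Fin n)}
    (hvar : ∀ i j : Fin n, i < j →
      m.toSyn (Finsupp.single i 1) < m.toSyn (Finsupp.single j 1))
    (F : Finset (Fin n)) (ℓ : Fin n) (hF : ∀ j ∈ F, j < ℓ) (c : Fin n → k) :
    IsLeadExp m (X ℓ + ∑ j ∈ F, C (c j) * X j : MvPolynomial (Fin n) k)
      (Finsupp.single ℓ 1) := by
  classical
  have hne : ∀ j ∈ F, (Finsupp.single j 1 : Fin n →₀ ℕ) ≠ Finsupp.single ℓ 1 := by
    intro j hj h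
    exact absurd (Finsupp.single_left_injective one_ne_zero h) (hF j hj).ne
  constructor
  · rw [MvPolynomial.mem_support_iff, MvPolynomial.coeff_add, MvPolynomial.coeff_X]
    have : MvPolynomial.coeff (Finsupp.single ℓ 1)
        (∑ j ∈ F, (C (c j) * X j : MvPolynomial (Fin n) k)) = 0 := by
      rw [MvPolynomial.coeff_sum]
      apply Finset.sum_eq_zero
      intro j hj
      rw [MvPolynomial.coeff_C_mul, MvPolynomial.coeff_X', if_neg (hne j hj), mul_zero]
    rw [this, add_zero]
    rw [if_pos rfl]
    exact (one_ne_zero : (1 : k) ≠ 0)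
  · intro α hα hαne
    rw [MvPolynomial.mem_support_iff, MvPolynomial.coeff_add, MvPolynomial.coeff_X',
      if_neg (fun h => hαne h.symm), zero_add, MvPolynomial.coeff_sum] at hα
    obtain ⟨j, hj, hjne⟩ := Finset.exists_ne_zero_of_sum_ne_zero hα
    rw [MvPolynomial.coeff_C_mul, MvPolynomial.coeff_X'] at hjne
    have : Finsupp.single j 1 = α := by
      by_contra h
      rw [if_neg h, mul_zero] at hjne
      exact hjne rfl
    rw [← this]
    exact hvar j ℓ (hF j hj)

end Aux

open MvPolynomial in
/-- If all `m` components of `A` are linear `d`-spaces with the same minimal free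
variables `{X_j : j ∈ J}`, then for every `J′ ≠ J` with `#J′ = d` the set `⊕_{j∈J′} ℕe_j`
is not contained in `D(A)`: choosing `ℓ ∈ J′ \ J`, the product
`f = ∏_i (X_ℓ + Σ_{j∈J, j<ℓ} b^{(i)}_{ℓ,j} X_j)` lies in `I(A)` and has leading exponent
`m·e_ℓ ∈ ⊕_{j∈J′} ℕe_j`. -/
theorem product_witness_not_parallel {k : Type*} [Field k] {n d mm : ℕ}
    (m : MonomialOrder (Fin n))
    (hvar : ∀ i j : Fin n, i < j →
      m.toSyn (Finsupp.single i 1) < m.toSyn (Finsupp.single j 1))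
    (J J' : Finset (Fin n)) (hJ : J.card = d) (hJ' : J'.card = d)
    (ℓ : Fin n) (hℓ' : ℓ ∈ J') (hℓ : ℓ ∉ J)
    (b : Fin mm → Fin n → Fin n → k)
    (P : Fin mm → Set (Fin n → k))
    (hP : ∀ i : Fin mm, P i = {x : Fin n → k |
      ∀ l ∉ J, x l + ∑ j ∈ J.filter (fun j => j < l), b i l j * x j = 0})
    (hMin : ∀ i : Fin mm, IsMinFreeVars (P i) J)
    (A : Set (Fin n → k)) (hA : A = ⋃ i, P i) :
    (∏ i : Fin mm,
        (X ℓ + ∑ j ∈ J.filter (fun j => j < ℓ), C (b i ℓ j) * X j)) ∈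
          MvPolynomial.vanishingIdeal k A ∧
      IsLeadExp m
        (∏ i : Fin mm,
          (X ℓ + ∑ j ∈ J.filter (fun j => j < ℓ), C (b i ℓ j) * X j))
        (Finsupp.single ℓ mm) ∧
      Finsupp.single ℓ mm ∈ expC m (MvPolynomial.vanishingIdeal k A) ∧
      ¬ dPlane 0 J' ⊆ expD m (MvPolynomial.vanishingIdeal k A) := by
  classical
  have hfac : ∀ i : Fin mm, IsLeadExp m
      (X ℓ + ∑ j ∈ J.filter (fun j => j < ℓ), C (b i ℓ j) * X j : MvPolynomial (Fin n) k)
      (Finsupp.single ℓ 1) := fun i =>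
    isLeadExp_factor hvar _ ℓ (fun j hj => (Finset.mem_filter.mp hj).2) (fun j => b i ℓ j)
  have hsum : (∑ _i : Fin mm, (Finsupp.single ℓ 1 : Fin n →₀ ℕ)) = Finsupp.single ℓ mm := by
    rw [Finset.sum_const, Finset.card_univ, Fintype.card_fin, Finsupp.smul_single,
      smul_eq_mul, mul_one]
  have hlead : IsLeadExp m
      (∏ i : Fin mm,
        (X ℓ + ∑ j ∈ J.filter (fun j => j < ℓ), C (b i ℓ j) * X j : MvPolynomial (Fin n) k))
      (Finsupp.single ℓ mm) := by
    rw [← hsum]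
    exact isLeadExp_prod _ _ _ (fun i _ => hfac i)
  have hmemI : (∏ i : Fin mm,
      (X ℓ + ∑ j ∈ J.filter (fun j => j < ℓ), C (b i ℓ j) * X j : MvPolynomial (Fin n) k)) ∈
      MvPolynomial.vanishingIdeal k A := by
    rw [MvPolynomial.mem_vanishingIdeal_iff]
    intro x hx
    rw [hA, Set.mem_iUnion] at hx
    obtain ⟨i, hi⟩ := hx
    rw [hP i] at hi
    rw [map_prod]
    apply Finset.prod_eq_zero (Finset.mem_univ i)
    have := hi ℓ hℓ
    simpa [MvPolynomial.eval_sum] using this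
  refine ⟨hmemI, hlead, ⟨_, hmemI, hlead⟩, ?_⟩
  intro hsub
  have hmemP : Finsupp.single ℓ mm ∈ dPlane (0 : Fin n →₀ ℕ) J' := by
    intro i hi
    have : ℓ ≠ i := fun h => hi (h ▸ hℓ')
    simp [Finsupp.single_apply, this]
  exact (hsub hmemP) ⟨_, hmemI, hlead⟩
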